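/- Let (A,d,⟨·,·⟩) be a cochain complex with pairing, Q := Q(A) its nondegenerate quotient with quotient map π_Q : A → Q. Then each Hodge decomposition A = H ⊕ im d ⊕ C induces a Hodge decomposition Q = π_Q(H) ⊕ im d_Q ⊕ π_Q(C) of Q, and π_Q respects these Hodge decompositions (π_Q(H) ⊆ π_Q(H) and π_Q(C) ⊆ π_Q(C), i.e. π_Q maps the harmonic part to the harmonic part and the complement to the complement). -/

import Mathlib

noncomputable section

/-- A cochain complex over `ℝ` (with a `ℤ`-grading realized as an internal direct sum
of submodules) together with a graded-symmetric pairing of degree `n` compatible with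
the differential. -/
structure PairedComplex (A : Type*) [AddCommGroup A] [Module ℝ A] where
  /-- the grading `A = ⊕ᵢ Aⁱ` -/
  grading : ℤ → Submodule ℝ A
  internal : DirectSum.IsInternal grading
  /-- the differential -/
  d : A →ₗ[ℝ] A
  d_degree : ∀ i : ℤ, ∀ x ∈ grading i, d x ∈ grading (i + 1)
  d_sq : ∀ x : A, d (d x) = 0
  /-- the degree of the pairing -/
  n : ℤ
  /-- the pairing -/
  pair : A →ₗ[ℝ] A →ₗ[ℝ] ℝ
  pair_degree : ∀ i j : ℤ, i + j ≠ n → ∀ x ∈ grading i, ∀ y ∈ grading j, pair x y = 0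
  pair_symm : ∀ i j : ℤ, ∀ x ∈ grading i, ∀ y ∈ grading j,
      pair x y = (-1 : ℝ) ^ (i * j) * pair y x
  pair_d : ∀ i : ℤ, ∀ x ∈ grading i, ∀ y : A,
      pair (d x) y = (-1 : ℝ) ^ (1 + i) * pair x (d y)

namespace PairedComplex

variable {A : Type*} [AddCommGroup A] [Module ℝ A] (X : PairedComplex A)

/-- `f` is homogeneous of degree `k`. -/
def IsDegree (f : A →ₗ[ℝ] A) (k : ℤ) : Prop :=
  ∀ i : ℤ, ∀ x ∈ X.grading i, f x ∈ X.grading (i + k)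

/-- A chain map: a degree `0` map commuting with the differential. -/
def IsChainMap (f : A →ₗ[ℝ] A) : Prop :=
  X.IsDegree f 0 ∧ ∀ x : A, f (X.d x) = X.d (f x)

/-- A projection: an idempotent chain map. -/
def IsProjection (p : A →ₗ[ℝ] A) : Prop :=
  X.IsChainMap p ∧ ∀ x : A, p (p x) = p x

/-- The projection `π_P = id + d∘P + P∘d` associated to a homotopy operator `P`. -/
def assocProj (P : A →ₗ[ℝ] A) : A →ₗ[ℝ] A :=
  LinearMap.id + X.d ∘ₗ P + P ∘ₗ X.d

/-- A homotopy operator: a degree `-1` map such that `−d∘P − P∘d` is a projection. -/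
def IsHomotopyOperator (P : A →ₗ[ℝ] A) : Prop :=
  X.IsDegree P (-1) ∧ X.IsProjection (-(X.d ∘ₗ P) - P ∘ₗ X.d)

/-- A homotopy operator `P` is special if `P∘P = 0` and `P∘d∘P = −P`. -/
def IsSpecial (P : A →ₗ[ℝ] A) : Prop :=
  (∀ x : A, P (P x) = 0) ∧ ∀ x : A, P (X.d (P x)) = -(P x)

/-- The symmetry property `⟨Px,y⟩ = (−1)^{deg x} ⟨x,Py⟩` of a propagator. -/
def IsSymmetricDeg (P : A →ₗ[ℝ] A) : Prop :=
  ∀ i : ℤ, ∀ x ∈ X.grading i, ∀ y : A,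
    X.pair (P x) y = (-1 : ℝ) ^ i * X.pair x (P y)

/-- A propagator: a homotopy operator satisfying the symmetry property. -/
def IsPropagator (P : A →ₗ[ℝ] A) : Prop :=
  X.IsHomotopyOperator P ∧ X.IsSymmetricDeg P

/-- A symmetric operator: `⟨px,y⟩ = ⟨x,py⟩`. -/
def IsSymmetric (p : A →ₗ[ℝ] A) : Prop :=
  ∀ x y : A, X.pair (p x) y = X.pair x (p y)

/-- Nondegeneracy of the pairing. -/
def Nondegenerate : Prop :=
  ∀ x : A, (∀ y : A, X.pair x y = 0) → x = 0

/-- The pairing is perfect: the musical map `x ↦ ⟨x,·⟩` is an isomorphism onto the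
graded dual, i.e. it is injective and every linear functional on `A^{n-i}` is
represented by an element of `A^i`. -/
def Perfect : Prop :=
  X.Nondegenerate ∧
    ∀ i : ℤ, ∀ φ : ↥(X.grading (X.n - i)) →ₗ[ℝ] ℝ,
      ∃ x ∈ X.grading i, ∀ y : ↥(X.grading (X.n - i)), X.pair x (y : A) = φ y

/-- A chain map induces an isomorphism on cohomology (elementwise formulation). -/
def IsQuasiIso (f : A →ₗ[ℝ] A) : Prop :=
  (∀ x : A, X.d x = 0 → ∃ y : A, X.d y = 0 ∧ ∃ z : A, f y - x = X.d z) ∧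
  (∀ y : A, X.d y = 0 → (∃ z : A, f y = X.d z) → ∃ w : A, y = X.d w)

/-- A graded subspace: spanned by its homogeneous elements. -/
def IsGradedSubspace (B : Submodule ℝ A) : Prop :=
  ∀ x ∈ B, x ∈ ⨆ i : ℤ, B ⊓ X.grading i

/-- A subcomplex: a graded subspace preserved by the differential. -/
def IsSubcomplex (B : Submodule ℝ A) : Prop :=
  X.IsGradedSubspace B ∧ ∀ x ∈ B, X.d x ∈ B

/-- The inclusion `B ↪ A` is a quasi-isomorphism (elementwise formulation). -/
def InclQuasiIso (B : Submodule ℝ A) : Prop :=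
  (∀ x : A, X.d x = 0 → ∃ b ∈ B, X.d b = 0 ∧ ∃ z : A, x - b = X.d z) ∧
  (∀ b ∈ B, X.d b = 0 → (∃ z : A, b = X.d z) → ∃ c ∈ B, b = X.d c)

/-- The restriction of the pairing to `B` is perfect. -/
def SubPerfect (B : Submodule ℝ A) : Prop :=
  (∀ x ∈ B, (∀ y ∈ B, X.pair x y = 0) → x = 0) ∧
    ∀ i : ℤ, ∀ φ : ↥(B ⊓ X.grading (X.n - i)) →ₗ[ℝ] ℝ,
      ∃ x ∈ B ⊓ X.grading i, ∀ y : ↥(B ⊓ X.grading (X.n - i)), X.pair x (y : A) = φ y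

/-- The orthogonal complement `B^⊥ = {x | ⟨x,b⟩ = 0 ∀ b ∈ B}`. -/
def perp (B : Submodule ℝ A) : Submodule ℝ A where
  carrier := {x : A | ∀ b ∈ B, X.pair x b = 0}
  add_mem' := by
    intro x y hx hy
    intro b hb
    have hx' := hx b hb
    have hy' := hy b hb
    simp only [map_add, LinearMap.add_apply, hx', hy', add_zero]
  zero_mem' := by
    intro b hb
    simp
  smul_mem' := by
    intro c x hx b hb
    have hx' := hx b hb
    simp only [map_smul, LinearMap.smul_apply, hx', smul_zero]

/-- A harmonic subspace: a graded subspace `H` with `ker d = H ⊕ im d`. -/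
def IsHarmonic (H : Submodule ℝ A) : Prop :=
  X.IsGradedSubspace H ∧ H ≤ LinearMap.ker X.d ∧
    H ⊓ LinearMap.range X.d = ⊥ ∧ H ⊔ LinearMap.range X.d = LinearMap.ker X.d

/-- A Hodge decomposition `B = H ⊕ d(B) ⊕ C` of a subcomplex `B ⊆ A` (with respect to
the restricted pairing); taking `B = ⊤` gives a Hodge decomposition of `A`. -/
def IsHodgeOn (B H C : Submodule ℝ A) : Prop :=
  H ≤ B ∧ C ≤ B ∧ X.IsGradedSubspace H ∧ X.IsGradedSubspace C ∧
  H ≤ LinearMap.ker X.d ∧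
  H ⊓ Submodule.map X.d B = ⊥ ∧
  H ⊔ Submodule.map X.d B = LinearMap.ker X.d ⊓ B ∧
  C ⊓ LinearMap.ker X.d = ⊥ ∧
  C ⊔ (LinearMap.ker X.d ⊓ B) = B ∧
  (∀ c ∈ C, ∀ c' ∈ C, X.pair c c' = 0) ∧
  (∀ c ∈ C, ∀ h ∈ H, X.pair c h = 0)

/-- A Hodge decomposition `A = H ⊕ im d ⊕ C` of the full complex. -/
def IsHodge (H C : Submodule ℝ A) : Prop :=
  X.IsHodgeOn ⊤ H C

/-- `A` is of Hodge type if it admits a Hodge decomposition. -/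
def IsHodgeType : Prop :=
  ∃ H C : Submodule ℝ A, X.IsHodge H C

/-- The operator `P_{H,C}` canonically associated to a Hodge decomposition `(H,C)`:
`P(dy) = −y` for `y ∈ C`, and `P = 0` on `H ⊕ C`. -/
def IsHodgeOperator (H C : Submodule ℝ A) (P : A →ₗ[ℝ] A) : Prop :=
  (∀ y ∈ C, P (X.d y) = -y) ∧ (∀ x ∈ H, P x = 0) ∧ ∀ x ∈ C, P x = 0

/-- The degenerate subspace `A_deg = {a | ⟨a,x⟩ = 0 ∀ x}`. -/
def degSub : Submodule ℝ A := X.perp ⊤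

/-- The induced pairing on cohomology is nondegenerate (elementwise formulation). -/
def CohomNondeg : Prop :=
  ∀ x : A, X.d x = 0 → (∀ y : A, X.d y = 0 → X.pair x y = 0) → ∃ z : A, x = X.d z

/-- The induced pairing on cohomology is perfect (elementwise formulation). -/
def CohomPerfect : Prop :=
  X.CohomNondeg ∧
    ∀ i : ℤ, ∀ φ : ↥(LinearMap.ker X.d ⊓ X.grading (X.n - i)) →ₗ[ℝ] ℝ,
      (∀ y : ↥(LinearMap.ker X.d ⊓ X.grading (X.n - i)),
          (∃ z : A, (y : A) = X.d z) → φ y = 0) →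
      ∃ x ∈ LinearMap.ker X.d ⊓ X.grading i,
        ∀ y : ↥(LinearMap.ker X.d ⊓ X.grading (X.n - i)), X.pair x (y : A) = φ y

end PairedComplex

namespace PairedComplex

variable {A : Type*} [AddCommGroup A] [Module ℝ A] (X : PairedComplex A)

/-- A realization of the nondegenerate quotient `Q(A) = A / A_deg`:
a surjective chain map with kernel `A_deg` preserving pairings, gradings and degree. -/
def IsQuotientMap {B : Type*} [AddCommGroup B] [Module ℝ B]
    (Y : PairedComplex B) (q : A →ₗ[ℝ] B) : Prop :=
  Function.Surjective q ∧
  LinearMap.ker q = X.degSub ∧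
  (∀ x : A, q (X.d x) = Y.d (q x)) ∧
  (∀ x y : A, Y.pair (q x) (q y) = X.pair x y) ∧
  (∀ i : ℤ, ∀ x ∈ X.grading i, q x ∈ Y.grading i) ∧
  Y.n = X.n

/-- A Hodge star on a nonnegatively graded cochain complex with pairing of degree `n`:
a degree-reversing involution (up to sign) such that `(x,y) := ⟨x,⋆y⟩` is a positive
definite inner product. -/
def IsHodgeStar (star : A →ₗ[ℝ] A) : Prop :=
  (∀ i : ℤ, ∀ x ∈ X.grading i, star x ∈ X.grading (X.n - i)) ∧
  (∀ i : ℤ, ∀ x ∈ X.grading i, star (star x) = ((-1 : ℝ) ^ (i * (X.n - i))) • x) ∧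
  (∀ x y : A, X.pair x (star y) = X.pair y (star x)) ∧
  (∀ x : A, x ≠ 0 → 0 < X.pair x (star x))

end PairedComplex

/-- A differential graded algebra with pairing: a `PairedComplex` together with an
associative product of degree `0` satisfying the Leibniz rule and compatible with the
pairing. -/
structure PairedDGA (A : Type*) [AddCommGroup A] [Module ℝ A] extends
    PairedComplex A where
  /-- the product -/
  mul : A →ₗ[ℝ] A →ₗ[ℝ] A
  mul_degree : ∀ i j : ℤ, ∀ x ∈ grading i, ∀ y ∈ grading j, mul x y ∈ grading (i + j)
  mul_assoc' : ∀ x y z : A, mul (mul x y) z = mul x (mul y z)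
  leibniz : ∀ i : ℤ, ∀ x ∈ grading i, ∀ y : A,
      d (mul x y) = mul (d x) y + ((-1 : ℝ) ^ i) • mul x (d y)
  pair_mul : ∀ x y z : A, pair (mul x y) z = pair x (mul y z)

namespace PairedDGA

variable {A : Type*} [AddCommGroup A] [Module ℝ A] (Y : PairedDGA A)

/-- `one` is a unit for the product. -/
def IsUnit (one : A) : Prop :=
  one ≠ 0 ∧ one ∈ Y.grading 0 ∧ ∀ x : A, Y.mul one x = x ∧ Y.mul x one = x

/-- graded commutativity. -/
def IsCommutative : Prop :=
  ∀ i j : ℤ, ∀ x ∈ Y.grading i, ∀ y ∈ Y.grading j,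
    Y.mul x y = ((-1 : ℝ) ^ (i * j)) • Y.mul y x

/-- An orientation of degree `n` inducing the pairing: a chain-level functional
supported in degree `n`, vanishing on boundaries, nontrivial on cohomology,
with `⟨x,y⟩ = o(x∧y)`. -/
def IsOrientation (o : A →ₗ[ℝ] ℝ) : Prop :=
  (∀ i : ℤ, i ≠ Y.n → ∀ x ∈ Y.grading i, o x = 0) ∧
  (∀ x : A, o (Y.d x) = 0) ∧
  (∃ x : A, Y.d x = 0 ∧ o x ≠ 0) ∧
  (∀ x y : A, Y.pair x y = o (Y.mul x y))

/-- The small subalgebra `S_P`: the smallest graded dg-subalgebra containing the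
harmonic subspace `H_P = im π_P` and preserved by `P`. -/
def smallSub (P : A →ₗ[ℝ] A) : Submodule ℝ A :=
  sInf {S : Submodule ℝ A |
    LinearMap.range (Y.toPairedComplex.assocProj P) ≤ S ∧
    Y.toPairedComplex.IsGradedSubspace S ∧
    (∀ x ∈ S, Y.d x ∈ S) ∧
    (∀ x ∈ S, ∀ y ∈ S, Y.mul x y ∈ S) ∧
    (∀ x ∈ S, P x ∈ S)}

end PairedDGA

/-- Elements of `A` obtained from homogeneous elements of the harmonic subspace
`H_P = im π_P` by iterated applications of `P` and of the product. -/
inductive TreeGen {A : Type*} [AddCommGroup A] [Module ℝ A]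
    (Y : PairedDGA A) (P : A →ₗ[ℝ] A) : A → Prop
  | base : ∀ (i : ℤ) (x : A), x ∈ Y.grading i →
      x ∈ LinearMap.range (Y.toPairedComplex.assocProj P) → TreeGen Y P x
  | mul : ∀ x y : A, TreeGen Y P x → TreeGen Y P y → TreeGen Y P (Y.mul x y)
  | app : ∀ x : A, TreeGen Y P x → TreeGen Y P (P x)


namespace PairedComplex

variable {A : Type*} [AddCommGroup A] [Module ℝ A] (X : PairedComplex A)

lemma aux_mem_iSup_grading (a : A) : a ∈ ⨆ i, X.grading i := by
  rw [X.internal.submodule_iSup_eq_top]; trivial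

lemma aux_mem_degSub {x : A} : x ∈ X.degSub ↔ ∀ b : A, X.pair x b = 0 := by
  constructor
  · intro h b; exact h b trivial
  · intro h b _; exact h b

/-- `⟨da, y⟩ = 0` whenever `dy = 0`. -/
lemma aux_pair_d_left (a y : A) (hy : X.d y = 0) : X.pair (X.d a) y = 0 := by
  refine Submodule.iSup_induction (p := X.grading)
    (motive := fun z => X.pair (X.d z) y = 0) (X.aux_mem_iSup_grading a)
    (fun i x hx => ?_) ?_ (fun u v hu hv => ?_)
  · show X.pair (X.d x) y = 0
    rw [X.pair_d i x hx y, hy]; simp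
  · show X.pair (X.d 0) y = 0
    simp
  · show X.pair (X.d (u + v)) y = 0
    change _ = _ at hu hv
    rw [map_add, map_add, LinearMap.add_apply, hu, hv, add_zero]

/-- `⟨u, dv⟩ = 0` whenever `du` is degenerate. -/
lemma aux_pair_d_right (u v : A) (hu : X.d u ∈ X.degSub) :
    X.pair u (X.d v) = 0 := by
  refine Submodule.iSup_induction (p := X.grading)
    (motive := fun z => X.pair u (X.d z) = 0) (X.aux_mem_iSup_grading v)
    (fun j w hw => ?_) ?_ (fun w₁ w₂ h1 h2 => ?_)
  · show X.pair u (X.d w) = 0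
    have key : X.pair u (X.d w) =
        (-1 : ℝ) ^ (1 + (X.n - 1 - j)) * X.pair (X.d u) w := by
      refine Submodule.iSup_induction (p := X.grading)
        (motive := fun z => X.pair z (X.d w)
          = (-1 : ℝ) ^ (1 + (X.n - 1 - j)) * X.pair (X.d z) w)
        (X.aux_mem_iSup_grading u) (fun i x hx => ?_) ?_ (fun x₁ x₂ g1 g2 => ?_)
      · show X.pair x (X.d w)
            = (-1 : ℝ) ^ (1 + (X.n - 1 - j)) * X.pair (X.d x) w
        by_cases hij : i = X.n - 1 - j
        · subst hij
          have hsq : (-1 : ℝ) ^ (1 + (X.n - 1 - j)) * (-1 : ℝ) ^ (1 + (X.n - 1 - j))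
              = 1 := by
            rw [← mul_zpow]; norm_num
          have hd := X.pair_d (X.n - 1 - j) x hx w
          rw [hd, ← mul_assoc, hsq, one_mul]
        · have e1 : X.pair x (X.d w) = 0 :=
            X.pair_degree i (j + 1) (by omega) x hx _ (X.d_degree j w hw)
          have e2 : X.pair (X.d x) w = 0 :=
            X.pair_degree (i + 1) j (by omega) _ (X.d_degree i x hx) w hw
          rw [e1, e2, mul_zero]
      · show X.pair (0 : A) (X.d w)
            = (-1 : ℝ) ^ (1 + (X.n - 1 - j)) * X.pair (X.d (0 : A)) w
        simp
      · show X.pair (x₁ + x₂) (X.d w)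
            = (-1 : ℝ) ^ (1 + (X.n - 1 - j)) * X.pair (X.d (x₁ + x₂)) w
        change _ = _ at g1 g2
        rw [map_add, LinearMap.add_apply, map_add, map_add, LinearMap.add_apply,
          g1, g2]
        ring
    rw [key, X.aux_mem_degSub.mp hu w, mul_zero]
  · show X.pair u (X.d (0 : A)) = 0
    simp
  · show X.pair u (X.d (w₁ + w₂)) = 0
    change _ = _ at h1 h2
    rw [map_add, map_add, h1, h2, add_zero]

/-- homogeneous orthogonality transfers: if `⟨C,H⟩ = 0` then `⟨H,C⟩ = 0`. -/
lemma aux_pair_graded_orth {H C : Submodule ℝ A} (hH : X.IsGradedSubspace H)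
    (hC : X.IsGradedSubspace C) (horth : ∀ c ∈ C, ∀ h ∈ H, X.pair c h = 0)
    {h c : A} (hh : h ∈ H) (hc : c ∈ C) : X.pair h c = 0 := by
  refine Submodule.iSup_induction (p := fun i => H ⊓ X.grading i)
    (motive := fun z => X.pair z c = 0) (hH h hh)
    (fun i x hx => ?_) ?_ (fun a b ha hb => ?_)
  · show X.pair x c = 0
    refine Submodule.iSup_induction (p := fun j => C ⊓ X.grading j)
      (motive := fun z => X.pair x z = 0) (hC c hc)
      (fun j y hy => ?_) ?_ (fun a b ha hb => ?_)
    · show X.pair x y = 0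
      rw [X.pair_symm i j x hx.2 y hy.2, horth y hy.1 x hx.1, mul_zero]
    · show X.pair x (0 : A) = 0
      simp
    · show X.pair x (a + b) = 0
      change _ = _ at ha hb
      rw [map_add, ha, hb, add_zero]
  · show X.pair (0 : A) c = 0
    simp
  · show X.pair (a + b) c = 0
    change _ = _ at ha hb
    rw [map_add, LinearMap.add_apply, ha, hb, add_zero]

/-- the image of a graded subspace under a grading-preserving surjection is graded. -/
lemma aux_map_graded {B : Type*} [AddCommGroup B] [Module ℝ B]
    (Y : PairedComplex B) (q : A →ₗ[ℝ] B)
    (hgr : ∀ i : ℤ, ∀ x ∈ X.grading i, q x ∈ Y.grading i)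
    {S : Submodule ℝ A} (hS : X.IsGradedSubspace S) :
    Y.IsGradedSubspace (Submodule.map q S) := by
  intro y hy
  obtain ⟨s, hs, rfl⟩ := Submodule.mem_map.mp hy
  refine Submodule.iSup_induction (p := fun i => S ⊓ X.grading i)
    (motive := fun z => q z ∈ ⨆ i, Submodule.map q S ⊓ Y.grading i) (hS s hs)
    (fun i x hx => ?_) ?_ (fun a b ha hb => ?_)
  · show q x ∈ ⨆ i, Submodule.map q S ⊓ Y.grading i
    exact Submodule.mem_iSup_of_mem i
      ⟨Submodule.mem_map_of_mem hx.1, hgr i x hx.2⟩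
  · show q (0 : A) ∈ ⨆ i, Submodule.map q S ⊓ Y.grading i
    rw [map_zero]; exact Submodule.zero_mem _
  · show q (a + b) ∈ ⨆ i, Submodule.map q S ⊓ Y.grading i
    change _ ∈ (⨆ i, Submodule.map q S ⊓ Y.grading i) at ha hb
    rw [map_add]; exact Submodule.add_mem _ ha hb

end PairedComplex

section Statements

variable {A B : Type*} [AddCommGroup A] [Module ℝ A] [AddCommGroup B] [Module ℝ B]
/-- every Hodge decomposition of `A` induces a Hodge decomposition of
the nondegenerate quotient, respected by the quotient map. -/
theorem stmt11 (X : PairedComplex A) (Y : PairedComplex B) (q : A →ₗ[ℝ] B)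
    (hq : X.IsQuotientMap Y q) (H C : Submodule ℝ A) (hHC : X.IsHodge H C) :
    Y.IsHodge (Submodule.map q H) (Submodule.map q C) ∧
    (∀ h ∈ H, q h ∈ Submodule.map q H) ∧ (∀ c ∈ C, q c ∈ Submodule.map q C) := by
  obtain ⟨hsurj, hker, hd, hpair, hgr, -⟩ := hq
  obtain ⟨-, -, hHgr, hCgr, hHker, hHinf, hHsup, hCinf, hCsup, hCC, hCH⟩ := hHC
  -- decomposition of an arbitrary element of A
  have hdecomp : ∀ x : A, ∃ c ∈ C, ∃ h ∈ H, ∃ b : A, x = c + (h + X.d b) := by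
    intro x
    have hx : x ∈ C ⊔ (LinearMap.ker X.d ⊓ ⊤) := by rw [hCsup]; trivial
    obtain ⟨c, hc, k, hk, rfl⟩ := Submodule.mem_sup.mp hx
    have hk' : k ∈ H ⊔ Submodule.map X.d ⊤ := by rw [hHsup]; exact hk
    obtain ⟨h, hh, b, hb, rfl⟩ := Submodule.mem_sup.mp hk'
    obtain ⟨b', -, rfl⟩ := hb
    exact ⟨c, hc, h, hh, b', rfl⟩
  -- a closed element of C whose differential is degenerate is itself degenerate
  have hCdeg : ∀ c ∈ C, X.d c ∈ X.degSub → c ∈ X.degSub := by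
    intro c hc hdc
    rw [X.aux_mem_degSub]
    intro x
    obtain ⟨c', hc', h', hh', b', rfl⟩ := hdecomp x
    rw [map_add, map_add, hCC c hc c' hc', hCH c hc h' hh',
      X.aux_pair_d_right c b' hdc]
    ring
  -- `Y.d (q a) = 0` iff `X.d a` is degenerate
  have hdq : ∀ a : A, Y.d (q a) = 0 → X.d a ∈ X.degSub := by
    intro a ha
    rw [← hker]
    show q (X.d a) = 0
    rw [hd, ha]
  refine ⟨⟨le_top, le_top, X.aux_map_graded Y q hgr hHgr,
      X.aux_map_graded Y q hgr hCgr, ?_, ?_, ?_, ?_, ?_, ?_, ?_⟩,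
    fun h hh => Submodule.mem_map_of_mem hh,
    fun c hc => Submodule.mem_map_of_mem hc⟩
  -- map q H ≤ ker Y.d
  · rintro _ ⟨h, hh, rfl⟩
    have : X.d h = 0 := hHker hh
    show Y.d (q h) = 0
    rw [← hd, this, map_zero]
  -- map q H ⊓ map Y.d ⊤ = ⊥
  · rw [Submodule.eq_bot_iff]
    rintro x ⟨⟨h, hh, rfl⟩, hx2⟩
    obtain ⟨b, -, hbe⟩ := hx2
    obtain ⟨a, rfl⟩ := hsurj b
    have hz : h - X.d a ∈ X.degSub := by
      rw [← hker]
      show q (h - X.d a) = 0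
      rw [map_sub, hd, hbe, sub_self]
    have hhd : h ∈ X.degSub := by
      rw [X.aux_mem_degSub]
      intro x
      obtain ⟨c', hc', h', hh', b', rfl⟩ := hdecomp x
      have hk0 : X.d (h' + X.d b') = 0 := by
        rw [map_add, hHker hh', X.d_sq, add_zero]
      have h1 : X.pair h c' = 0 := X.aux_pair_graded_orth hHgr hCgr hCH hh hc'
      have h2 : X.pair h (h' + X.d b') = 0 := by
        have e : X.pair ((h - X.d a) + X.d a) (h' + X.d b') = 0 := by
          rw [map_add X.pair (h - X.d a) (X.d a), LinearMap.add_apply,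
            hz (h' + X.d b') trivial,
            X.aux_pair_d_left a (h' + X.d b') hk0, add_zero]
        simpa using e
      rw [map_add, h1, h2]
      ring
    show q h = 0
    rw [← LinearMap.mem_ker, hker]
    exact hhd
  -- map q H ⊔ map Y.d ⊤ = ker Y.d ⊓ ⊤
  · refine le_antisymm (sup_le ?_ ?_) ?_
    · rintro _ ⟨h, hh, rfl⟩
      refine ⟨?_, trivial⟩
      show Y.d (q h) = 0
      rw [← hd, hHker hh, map_zero]
    · rintro _ ⟨b, -, rfl⟩
      exact ⟨Y.d_sq b, trivial⟩
    · rintro y ⟨hy, -⟩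
      obtain ⟨a, rfl⟩ := hsurj y
      obtain ⟨c, hc, h, hh, b, rfl⟩ := hdecomp a
      have hdc : X.d c ∈ X.degSub := by
        have := hdq _ hy
        have hda : X.d (c + (h + X.d b)) = X.d c := by
          rw [map_add, map_add, hHker hh, X.d_sq, add_zero, add_zero]
        rwa [hda] at this
      have hqc : q c = 0 := by
        rw [← LinearMap.mem_ker, hker]
        exact hCdeg c hc hdc
      have : q (c + (h + X.d b)) = q h + Y.d (q b) := by
        rw [map_add, map_add, hqc, zero_add, hd]
      rw [this]
      exact Submodule.add_mem_sup (Submodule.mem_map_of_mem hh)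
        ⟨q b, trivial, rfl⟩
  -- map q C ⊓ ker Y.d = ⊥
  · rw [Submodule.eq_bot_iff]
    rintro x ⟨⟨c, hc, rfl⟩, hx2⟩
    have hdc : X.d c ∈ X.degSub := hdq c hx2
    show q c = 0
    rw [← LinearMap.mem_ker, hker]
    exact hCdeg c hc hdc
  -- map q C ⊔ (ker Y.d ⊓ ⊤) = ⊤
  · rw [eq_top_iff]
    rintro y -
    obtain ⟨a, rfl⟩ := hsurj y
    have hx : a ∈ C ⊔ (LinearMap.ker X.d ⊓ ⊤) := by rw [hCsup]; trivial
    obtain ⟨c, hc, k, hk, rfl⟩ := Submodule.mem_sup.mp hx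
    rw [map_add]
    refine Submodule.add_mem_sup (Submodule.mem_map_of_mem hc) ⟨?_, trivial⟩
    show Y.d (q k) = 0
    rw [← hd, LinearMap.mem_ker.mp hk.1, map_zero]
  -- ⟨C, C⟩ = 0
  · rintro _ ⟨c, hc, rfl⟩ _ ⟨c', hc', rfl⟩
    rw [hpair]
    exact hCC c hc c' hc'
  -- ⟨C, H⟩ = 0
  · rintro _ ⟨c, hc, rfl⟩ _ ⟨h, hh, rfl⟩
    rw [hpair]
    exact hCH c hc h hh

end Statements
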